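/- Let a > max{1, α} and b < −1. Then there is at most one function w, continuous on [0,1] and twice continuously differentiable on (0,1), satisfying w''(x) + h(w(x)) = 0 for all x ∈ (0,1), w(0) = a and w(1) = b. -/

import Mathlib

open MeasureTheory Metric Set Filter Topology

noncomputable section

/-- Euclidean space ℝ^N. -/
abbrev Euc (N : ℕ) : Type := EuclideanSpace ℝ (Fin N)

/-- The Laplacian of `u : Euc N → ℝ` at `x`, as the trace of the second derivative. -/
def lap {N : ℕ} (u : Euc N → ℝ) (x : Euc N) : ℝ :=
  ∑ i : Fin N,
    iteratedFDeriv ℝ 2 u x ![EuclideanSpace.single i (1 : ℝ), EuclideanSpace.single i (1 : ℝ)]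

/-- `Ω` is a bounded, open, connected subset of ℝ^N. -/
def NiceDomain {N : ℕ} (Ω : Set (Euc N)) : Prop :=
  IsOpen Ω ∧ IsConnected Ω ∧ Bornology.IsBounded Ω

/-- Hypothesis (a): `f` is continuously differentiable on `[0,∞)`, `f 0 = 0` and
`f s < 0` for `s > 1`. -/
def NiceReaction (f : ℝ → ℝ) : Prop :=
  ContDiffOn ℝ 1 f (Ici (0 : ℝ)) ∧ f 0 = 0 ∧ ∀ s > (1 : ℝ), f s < 0

/-- The limit nonlinearity `h(w) = α f(α⁻¹ w⁺) − g(−w⁻)`. -/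
def hlim (f g : ℝ → ℝ) (α : ℝ) (w : ℝ) : ℝ :=
  α * f (α⁻¹ * max w 0) - g (-(min w 0))

/-- All three `W^{2,p}(Ω)`-norm pieces of `w` (function, gradient, Hessian) are
bounded by `C` in `L^p(Ω)`. -/
def W2pBound {N : ℕ} (p : ℝ) (Ω : Set (Euc N)) (w : Euc N → ℝ) (C : ℝ) : Prop :=
  eLpNorm w (ENNReal.ofReal p) (volume.restrict Ω) ≤ ENNReal.ofReal C ∧
  eLpNorm (fun x => ‖fderiv ℝ w x‖) (ENNReal.ofReal p) (volume.restrict Ω) ≤ ENNReal.ofReal C ∧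
  eLpNorm (fun x => ‖iteratedFDeriv ℝ 2 w x‖) (ENNReal.ofReal p) (volume.restrict Ω) ≤
    ENNReal.ofReal C

/-- `w` belongs to `W^{2,p}(Ω)`; since `p > N` such functions have classical regularity,
which we record as part of the definition. -/
def MemW2p {N : ℕ} (p : ℝ) (Ω : Set (Euc N)) (w : Euc N → ℝ) : Prop :=
  ContDiffOn ℝ 2 w Ω ∧ ContinuousOn w (closure Ω) ∧ ∃ C, W2pBound p Ω w C

/-- The `C^{1,lam}(S)` norm of `w` is at most `ε`. -/
def C1HolderSmall {N : ℕ} (lam : ℝ) (S : Set (Euc N)) (w : Euc N → ℝ) (ε : ℝ) : Prop :=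
  (∀ x ∈ S, |w x| ≤ ε ∧ ‖fderiv ℝ w x‖ ≤ ε) ∧
  ∀ x ∈ S, ∀ y ∈ S, ‖fderiv ℝ w x - fderiv ℝ w y‖ ≤ ε * ‖x - y‖ ^ lam

/-- Hypothesis (b1) for a single pair of boundary data: `m₁, m₂ ≥ 0` and
`m₁, m₂ ∈ W^{2,p}(Ω)`. -/
def B1 {N : ℕ} (p : ℝ) (Ω : Set (Euc N)) (m1 m2 : Euc N → ℝ) : Prop :=
  (∀ x ∈ closure Ω, 0 ≤ m1 x ∧ 0 ≤ m2 x) ∧ MemW2p p Ω m1 ∧ MemW2p p Ω m2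

/-- Hypothesis (b2): `m₁ᵏ, m₂ᵏ` are bounded in `W^{2,p}(Ω)` independently of `k`. -/
def B2 {N : ℕ} (p : ℝ) (Ω : Set (Euc N)) (m1k m2k : ℕ → Euc N → ℝ) : Prop :=
  ∃ C, ∀ k, W2pBound p Ω (m1k k) C ∧ W2pBound p Ω (m2k k) C

/-- Hypothesis (b3): there are `m₁, m₂ ∈ W^{2,p}(Ω)` with `α m₁ − m₂` not identically
zero on `∂Ω` such that `mᵢᵏ → mᵢ` in `C^{1,λ'}(closure Ω)` for every `λ' ∈ (0, 1 − N/p)`. -/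
def B3 {N : ℕ} (p α : ℝ) (Ω : Set (Euc N)) (m1k m2k : ℕ → Euc N → ℝ)
    (m1 m2 : Euc N → ℝ) : Prop :=
  MemW2p p Ω m1 ∧ MemW2p p Ω m2 ∧ (∃ x ∈ frontier Ω, α * m1 x - m2 x ≠ 0) ∧
  ∀ lam' ∈ Ioo (0 : ℝ) (1 - (N : ℝ) / p), ∀ ε > (0 : ℝ), ∃ K : ℕ, ∀ k ≥ K,
    C1HolderSmall lam' (closure Ω) (fun x => m1k k x - m1 x) ε ∧
    C1HolderSmall lam' (closure Ω) (fun x => m2k k x - m2 x) ε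

/-- `(u,v)` is a solution of problem `(P_k)` on `Ω × (0,∞)` with boundary data `m₁, m₂`
and initial data `u₀, v₀`. -/
def IsSolPk {N : ℕ} (Ω : Set (Euc N)) (f g : ℝ → ℝ) (α k : ℝ)
    (m1 m2 u0 v0 : Euc N → ℝ) (u v : Euc N → ℝ → ℝ) : Prop :=
  ContinuousOn (fun q : Euc N × ℝ => u q.1 q.2) (closure Ω ×ˢ Ici (0 : ℝ)) ∧
  ContinuousOn (fun q : Euc N × ℝ => v q.1 q.2) (closure Ω ×ˢ Ici (0 : ℝ)) ∧
  (∀ t > (0 : ℝ), ContDiffOn ℝ 2 (fun x => u x t) Ω ∧ ContDiffOn ℝ 2 (fun x => v x t) Ω) ∧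
  (∀ x ∈ Ω, ∀ t > (0 : ℝ),
    HasDerivAt (fun s => u x s) (lap (fun y => u y t) x + f (u x t) - k * u x t * v x t) t ∧
    HasDerivAt (fun s => v x s) (lap (fun y => v y t) x + g (v x t) - α * k * u x t * v x t) t) ∧
  (∀ x ∈ frontier Ω, ∀ t > (0 : ℝ), u x t = m1 x ∧ v x t = m2 x) ∧
  (∀ x ∈ Ω, u x 0 = u0 x ∧ v x 0 = v0 x)

/-- `(u,v)` is a solution of problem `(P_{k,T})`, i.e. of `(P_k)` on `Ω × (0,T)`. -/
def IsSolPkT {N : ℕ} (Ω : Set (Euc N)) (f g : ℝ → ℝ) (α k : ℝ)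
    (m1 m2 u0 v0 : Euc N → ℝ) (u v : Euc N → ℝ → ℝ) (T : ℝ) : Prop :=
  ContinuousOn (fun q : Euc N × ℝ => u q.1 q.2) (closure Ω ×ˢ Icc (0 : ℝ) T) ∧
  ContinuousOn (fun q : Euc N × ℝ => v q.1 q.2) (closure Ω ×ˢ Icc (0 : ℝ) T) ∧
  (∀ t ∈ Ioo (0 : ℝ) T, ContDiffOn ℝ 2 (fun x => u x t) Ω ∧ ContDiffOn ℝ 2 (fun x => v x t) Ω) ∧
  (∀ x ∈ Ω, ∀ t ∈ Ioo (0 : ℝ) T,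
    HasDerivAt (fun s => u x s) (lap (fun y => u y t) x + f (u x t) - k * u x t * v x t) t ∧
    HasDerivAt (fun s => v x s) (lap (fun y => v y t) x + g (v x t) - α * k * u x t * v x t) t) ∧
  (∀ x ∈ frontier Ω, ∀ t ∈ Ioo (0 : ℝ) T, u x t = m1 x ∧ v x t = m2 x) ∧
  (∀ x ∈ Ω, u x 0 = u0 x ∧ v x 0 = v0 x)

/-- `(u,v)` is an entire solution (defined for all `t ∈ ℝ`) of the `k`-dependent system
with boundary data `m₁, m₂`. -/
def IsSolPkEntire {N : ℕ} (Ω : Set (Euc N)) (f g : ℝ → ℝ) (α k : ℝ)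
    (m1 m2 : Euc N → ℝ) (u v : Euc N → ℝ → ℝ) : Prop :=
  ContinuousOn (fun q : Euc N × ℝ => u q.1 q.2) (closure Ω ×ˢ (univ : Set ℝ)) ∧
  ContinuousOn (fun q : Euc N × ℝ => v q.1 q.2) (closure Ω ×ˢ (univ : Set ℝ)) ∧
  (∀ t : ℝ, ContDiffOn ℝ 2 (fun x => u x t) Ω ∧ ContDiffOn ℝ 2 (fun x => v x t) Ω) ∧
  (∀ x ∈ Ω, ∀ t : ℝ,
    HasDerivAt (fun s => u x s) (lap (fun y => u y t) x + f (u x t) - k * u x t * v x t) t ∧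
    HasDerivAt (fun s => v x s) (lap (fun y => v y t) x + g (v x t) - α * k * u x t * v x t) t) ∧
  (∀ x ∈ frontier Ω, ∀ t : ℝ, u x t = m1 x ∧ v x t = m2 x)

/-- `w` is a solution of the stationary limit problem `(S)`:
`Δw + h(w) = 0` in `Ω`, `w = α m₁ − m₂` on `∂Ω`. -/
def IsSolS {N : ℕ} (Ω : Set (Euc N)) (f g : ℝ → ℝ) (α p : ℝ)
    (m1 m2 : Euc N → ℝ) (w : Euc N → ℝ) : Prop :=
  MemW2p p Ω w ∧ (∀ x ∈ Ω, lap w x + hlim f g α (w x) = 0) ∧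
  ∀ x ∈ frontier Ω, w x = α * m1 x - m2 x

/-- The solution `wt` of `(S)` is non-degenerate: the only `W^{2,p}` solution of the
linearised problem `Δw + h'(wt) w = 0` a.e. in `Ω`, `w = 0` on `∂Ω`, is `w ≡ 0`. -/
def NonDegenS {N : ℕ} (Ω : Set (Euc N)) (f g : ℝ → ℝ) (α p : ℝ) (wt : Euc N → ℝ) : Prop :=
  ∀ w : Euc N → ℝ, MemW2p p Ω w →
    (∀ᵐ x ∂(volume.restrict Ω), lap w x + deriv (hlim f g α) (wt x) * w x = 0) →
    (∀ x ∈ frontier Ω, w x = 0) → ∀ x ∈ Ω, w x = 0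

/-- `(u,v)` is a non-negative stationary solution of `(P_k)`. -/
def IsStatPk {N : ℕ} (Ω : Set (Euc N)) (f g : ℝ → ℝ) (α k : ℝ)
    (m1 m2 : Euc N → ℝ) (u v : Euc N → ℝ) : Prop :=
  ContDiffOn ℝ 2 u Ω ∧ ContDiffOn ℝ 2 v Ω ∧
  ContinuousOn u (closure Ω) ∧ ContinuousOn v (closure Ω) ∧
  (∀ x ∈ closure Ω, 0 ≤ u x ∧ 0 ≤ v x) ∧
  (∀ x ∈ Ω, lap u x + f (u x) - k * u x * v x = 0 ∧
            lap v x + g (v x) - α * k * u x * v x = 0) ∧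
  (∀ x ∈ frontier Ω, u x = m1 x ∧ v x = m2 x)

/-- The `L^q(Ω)` distance between two functions. -/
def LqDist {N : ℕ} (q : ℝ) (Ω : Set (Euc N)) (w1 w2 : Euc N → ℝ) : ENNReal :=
  eLpNorm (fun x => w1 x - w2 x) (ENNReal.ofReal q) (volume.restrict Ω)

namespace Stmt15Aux

variable {f g : ℝ → ℝ} {α a b : ℝ}

/-- Antiderivative of the limit nonlinearity. -/
def HH (f g : ℝ → ℝ) (α : ℝ) (t : ℝ) : ℝ := ∫ s in (0:ℝ)..t, hlim f g α s

lemma hlim_continuous (hf : ContDiffOn ℝ 1 f (Ici (0:ℝ))) (hg : ContDiffOn ℝ 1 g (Ici (0:ℝ)))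
    (hα : 0 < α) : Continuous (hlim f g α) := by
  have hmax : Continuous fun w : ℝ => α⁻¹ * max w 0 := by continuity
  have hmin : Continuous fun w : ℝ => -(min w 0) := by continuity
  have h1 : Continuous fun w : ℝ => f (α⁻¹ * max w 0) := by
    rw [← continuousOn_univ]
    refine ContinuousOn.comp hf.continuousOn hmax.continuousOn ?_
    intro w _
    exact mul_nonneg (inv_nonneg.2 hα.le) (le_max_right _ _)
  have h2 : Continuous fun w : ℝ => g (-(min w 0)) := by
    rw [← continuousOn_univ]
    refine ContinuousOn.comp hg.continuousOn hmin.continuousOn ?_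
    intro w _
    simp only [mem_Ici, neg_nonneg]
    exact min_le_right _ _
  have : hlim f g α = fun w => α * f (α⁻¹ * max w 0) - g (-(min w 0)) := rfl
  rw [this]
  exact (continuous_const.mul h1).sub h2

lemma hlim_neg (hg0 : g 0 = 0) (hfneg : ∀ s > (1:ℝ), f s < 0) (hα : 0 < α)
    {t : ℝ} (ht : α < t) : hlim f g α t < 0 := by
  have ht0 : 0 < t := hα.trans ht
  have h1 : (1:ℝ) < α⁻¹ * t := by
    rw [← div_eq_inv_mul]
    exact (one_lt_div hα).2 ht
  have he : hlim f g α t = α * f (α⁻¹ * t) := by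
    show α * f (α⁻¹ * max t 0) - g (-(min t 0)) = _
    rw [max_eq_left ht0.le, min_eq_right ht0.le, neg_zero, hg0, sub_zero]
  rw [he]
  exact mul_neg_of_pos_of_neg hα (hfneg _ h1)

lemma hlim_pos (hf0 : f 0 = 0) (hgneg : ∀ s > (1:ℝ), g s < 0) (hα : 0 < α)
    {t : ℝ} (ht : t < -1) : 0 < hlim f g α t := by
  have ht0 : t < 0 := ht.trans (by norm_num)
  have he : hlim f g α t = - g (-t) := by
    show α * f (α⁻¹ * max t 0) - g (-(min t 0)) = _
    rw [max_eq_right ht0.le, min_eq_left ht0.le, mul_zero, hf0, mul_zero, zero_sub]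
  rw [he]
  have h1 : (1:ℝ) < -t := by linarith
  linarith [hgneg _ h1]

lemma hasDerivAt_HH (hcont : Continuous (hlim f g α)) (t : ℝ) :
    HasDerivAt (HH f g α) (hlim f g α t) t :=
  intervalIntegral.integral_hasDerivAt_right (hcont.intervalIntegrable _ _)
    hcont.stronglyMeasurable.stronglyMeasurableAtFilter hcont.continuousAt

lemma continuous_HH (hcont : Continuous (hlim f g α)) : Continuous (HH f g α) :=
  continuous_iff_continuousAt.2 fun t => (hasDerivAt_HH hcont t).continuousAt

/-- `HH` is strictly decreasing on `(α, ∞)`. -/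
lemma HH_lt (hcont : Continuous (hlim f g α)) (hg0 : g 0 = 0)
    (hfneg : ∀ s > (1:ℝ), f s < 0) (hα : 0 < α) {c d : ℝ} (hc : α < c) (hcd : c < d) :
    HH f g α d < HH f g α c := by
  have key : HH f g α d - HH f g α c = ∫ s in c..d, hlim f g α s := by
    unfold HH
    rw [← intervalIntegral.integral_interval_sub_left (hcont.intervalIntegrable 0 d)
      (hcont.intervalIntegrable 0 c)]
  have hpos : 0 < ∫ s in c..d, -(hlim f g α s) := by
    apply intervalIntegral.intervalIntegral_pos_of_pos_on
    · exact (hcont.neg).intervalIntegrable _ _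
    · intro x hx
      exact neg_pos.2 (hlim_neg hg0 hfneg hα (hc.trans hx.1))
    · exact hcd
  rw [intervalIntegral.integral_neg] at hpos
  linarith

lemma neBot_Ioo {u v z : ℝ} (huv : u < v) (hz : z ∈ Icc u v) : (𝓝[Ioo u v] z).NeBot := by
  apply mem_closure_iff_nhdsWithin_neBot.1
  rw [closure_Ioo huv.ne]
  exact hz

lemma deriv2_hasDerivAt {w : ℝ → ℝ} (hd : ContDiffOn ℝ 2 w (Ioo 0 1)) {x : ℝ}
    (hx : x ∈ Ioo (0:ℝ) 1) :
    HasDerivAt w (deriv w x) x ∧ HasDerivAt (deriv w) (deriv (deriv w) x) x := by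
  have hIoo : IsOpen (Ioo (0:ℝ) 1) := isOpen_Ioo
  constructor
  · exact ((hd.differentiableOn (by norm_num)).differentiableAt (hIoo.mem_nhds hx)).hasDerivAt
  · exact (((hd.deriv_of_isOpen (m := 1) hIoo (by norm_num)).differentiableOn (by norm_num)).differentiableAt
      (hIoo.mem_nhds hx)).hasDerivAt

lemma second_deriv_not_localMax {w : ℝ → ℝ}
    (hc : ContinuousOn w (Icc 0 1)) (hd : ContDiffOn ℝ 2 w (Ioo 0 1))
    {x0 : ℝ} (hx0 : x0 ∈ Ioo (0:ℝ) 1) (h1 : deriv w x0 = 0)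
    (h2 : 0 < deriv (deriv w) x0) : ¬ IsLocalMax w x0 := by
  intro hmax
  have hdd : HasDerivAt (deriv w) (deriv (deriv w) x0) x0 := (deriv2_hasDerivAt hd hx0).2
  have hslope := hasDerivAt_iff_tendsto_slope.1 hdd
  have hev0 : ∀ᶠ y in 𝓝[>] x0, 0 < slope (deriv w) x0 y := by
    have h' : ∀ᶠ y in 𝓝[≠] x0, 0 < slope (deriv w) x0 y :=
      hslope.eventually (eventually_gt_nhds h2)
    exact h'.filter_mono (nhdsWithin_mono x0 fun y hy => hy.ne')
  have hev1 : ∀ᶠ y in 𝓝[>] x0, 0 < deriv w y := by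
    filter_upwards [hev0, self_mem_nhdsWithin] with y hy hy'
    have hxy : 0 < y - x0 := sub_pos.2 hy'
    have hm := mul_pos hy hxy
    rw [slope_def_field, div_mul_cancel₀ _ hxy.ne', h1, sub_zero] at hm
    exact hm
  have hev2 : ∀ᶠ y in 𝓝[>] x0, y < 1 :=
    (eventually_lt_nhds hx0.2).filter_mono nhdsWithin_le_nhds
  obtain ⟨u, hu, hsub⟩ := mem_nhdsGT_iff_exists_Ioo_subset.1 (hev1.and hev2)
  set m := min u 1 with hm
  have hx0m : x0 < m := lt_min hu hx0.2
  set t := (x0 + m)/2 with htdef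
  have hx0t : x0 < t := by simp only [htdef]; linarith
  have htm : t < m := by simp only [htdef]; linarith
  have htu : t < u := htm.trans_le (min_le_left _ _)
  have ht1 : t < 1 := htm.trans_le (min_le_right _ _)
  have hmono : StrictMonoOn w (Icc x0 t) := by
    apply strictMonoOn_of_deriv_pos (convex_Icc x0 t)
    · exact hc.mono fun y hy => ⟨hx0.1.le.trans hy.1, hy.2.trans ht1.le⟩
    · intro y hy
      rw [interior_Icc] at hy
      exact (hsub ⟨hy.1, hy.2.trans htu⟩).1
  obtain ⟨y, hy1, hy2⟩ := ((hmax.filter_mono nhdsWithin_le_nhds).and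
    (eventually_of_mem (Ioc_mem_nhdsGT_of_mem ⟨le_rfl, hx0t⟩) (fun y hy => hy))).exists
  have : w x0 < w y := hmono (left_mem_Icc.2 hx0t.le) ⟨hy2.1.le, hy2.2⟩ hy2.1
  linarith

lemma second_deriv_not_localMin {w : ℝ → ℝ}
    (hc : ContinuousOn w (Icc 0 1)) (hd : ContDiffOn ℝ 2 w (Ioo 0 1))
    {x0 : ℝ} (hx0 : x0 ∈ Ioo (0:ℝ) 1) (h1 : deriv w x0 = 0)
    (h2 : deriv (deriv w) x0 < 0) : ¬ IsLocalMin w x0 := by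
  intro hmin
  have e1 : deriv (fun x => -w x) = fun x => -deriv w x := funext fun x => deriv.neg
  refine second_deriv_not_localMax (w := fun x => -w x) hc.neg hd.neg hx0 ?_ ?_ hmin.neg
  · rw [e1]
    simp [h1]
  · rw [e1]
    have h3 : deriv (fun x => -deriv w x) x0 = -deriv (deriv w) x0 := deriv.neg
    rw [h3]
    linarith

lemma lipschitzOnWith_of_contDiffOn {F : ℝ → ℝ} (hF : ContDiffOn ℝ 1 F (Ici (0:ℝ)))
    {R : ℝ} (hR : 0 ≤ R) : ∃ K : NNReal, LipschitzOnWith K F (Icc 0 R) := by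
  rcases eq_or_lt_of_le hR with rfl | hR'
  · refine ⟨1, LipschitzOnWith.of_dist_le_mul fun x hx y hy => ?_⟩
    rw [Icc_self, mem_singleton_iff] at hx hy
    subst hx; subst hy
    simp
  · have hu : UniqueDiffOn ℝ (Icc (0:ℝ) R) := uniqueDiffOn_Icc hR'
    have h1 : ContDiffOn ℝ 1 F (Icc 0 R) := hF.mono Icc_subset_Ici_self
    have hder : ContinuousOn (derivWithin F (Icc 0 R)) (Icc 0 R) :=
      h1.continuousOn_derivWithin hu le_rfl
    obtain ⟨C, hC⟩ := isCompact_Icc.exists_bound_of_continuousOn hder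
    refine ⟨⟨max C 0, le_max_right _ _⟩, ?_⟩
    have hdiff : DifferentiableOn ℝ F (Icc 0 R) := h1.differentiableOn (by norm_num)
    apply LipschitzOnWith.of_dist_le_mul
    intro x hx y hy
    rw [dist_eq_norm, dist_eq_norm]
    exact (convex_Icc (0:ℝ) R).norm_image_sub_le_of_norm_derivWithin_le hdiff
      (fun z hz => (hC z hz).trans (le_max_left _ _)) hy hx

lemma exists_V (hf : ContDiffOn ℝ 1 f (Ici (0:ℝ))) (hg : ContDiffOn ℝ 1 g (Ici (0:ℝ)))
    (hα : 0 < α) (hb0 : b ≤ 0) (ha0 : 0 ≤ a) :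
    ∃ (K : NNReal) (V : ℝ × ℝ → ℝ × ℝ), LipschitzWith K V ∧
      ∀ p : ℝ × ℝ, p.1 ∈ Icc b a → V p = (p.2, - hlim f g α p.1) := by
  obtain ⟨K1, hK1⟩ := lipschitzOnWith_of_contDiffOn hf
    (R := α⁻¹ * a) (mul_nonneg (inv_nonneg.2 hα.le) ha0)
  obtain ⟨K2, hK2⟩ := lipschitzOnWith_of_contDiffOn hg (R := -b) (neg_nonneg.2 hb0)
  set m1 : ℝ → ℝ := fun u => max (min u a) 0 with hm1def
  set m2 : ℝ → ℝ := fun u => min (max u b) 0 with hm2def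
  have hm1 : LipschitzWith 1 m1 := (LipschitzWith.id.min_const a).max_const 0
  have hm2 : LipschitzWith 1 m2 := (LipschitzWith.id.max_const b).min_const 0
  have hA : LipschitzWith (K1 * (‖(α⁻¹:ℝ)‖₊ * 1)) (fun u => f (α⁻¹ * m1 u)) := by
    have hinner : LipschitzWith (‖(α⁻¹:ℝ)‖₊ * 1) (fun u => α⁻¹ * m1 u) := by
      have := (lipschitzWith_smul (α⁻¹ : ℝ) (β := ℝ)).comp hm1
      simpa [Function.comp_def, smul_eq_mul] using this
    have hmaps : ∀ u : ℝ, α⁻¹ * m1 u ∈ Icc (0:ℝ) (α⁻¹ * a) := by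
      intro u
      constructor
      · exact mul_nonneg (inv_nonneg.2 hα.le) (le_max_right _ _)
      · exact mul_le_mul_of_nonneg_left (max_le (min_le_right u a) ha0) (inv_nonneg.2 hα.le)
    have := hK1.comp (hinner.lipschitzOnWith (s := univ)) (fun u _ => hmaps u)
    rw [lipschitzOnWith_univ] at this
    exact this
  have hB : LipschitzWith (K2 * 1) (fun u => g (-(m2 u))) := by
    have hinner : LipschitzWith 1 (fun u : ℝ => -(m2 u)) := hm2.neg
    have hmaps : ∀ u : ℝ, -(m2 u) ∈ Icc (0:ℝ) (-b) := by
      intro u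
      constructor
      · simp only [hm2def, neg_nonneg]
        exact min_le_right _ _
      · simp only [hm2def, neg_le_neg_iff]
        exact le_min (le_max_right u b) hb0
    have := hK2.comp (hinner.lipschitzOnWith (s := univ)) (fun u _ => hmaps u)
    rw [lipschitzOnWith_univ] at this
    exact this
  have hC : LipschitzWith (‖(α:ℝ)‖₊ * (K1 * (‖(α⁻¹:ℝ)‖₊ * 1)) + K2 * 1)
      (fun u => α * f (α⁻¹ * m1 u) - g (-(m2 u))) := by
    refine LipschitzWith.sub ?_ hB
    have := (lipschitzWith_smul (α : ℝ) (β := ℝ)).comp hA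
    simpa [Function.comp_def, smul_eq_mul] using this
  refine ⟨max 1 ((‖(α:ℝ)‖₊ * (K1 * (‖(α⁻¹:ℝ)‖₊ * 1)) + K2 * 1) * 1),
    fun p => (p.2, -(α * f (α⁻¹ * m1 p.1) - g (-(m2 p.1)))), ?_, ?_⟩
  · exact LipschitzWith.prodMk LipschitzWith.prod_snd ((hC.comp LipschitzWith.prod_fst).neg)
  · rintro ⟨u, v⟩ ⟨hu1, hu2⟩
    simp only [Prod.mk.injEq, true_and]
    have e1 : min u a = u := min_eq_left hu2
    have e2 : max u b = u := max_eq_left hu1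
    show -(α * f (α⁻¹ * m1 u) - g (-(m2 u))) = - hlim f g α u
    simp only [hm1def, hm2def, e1, e2]
    rfl

lemma energy_eq (hcont : Continuous (hlim f g α)) {w : ℝ → ℝ}
    (hd : ContDiffOn ℝ 2 w (Ioo 0 1))
    (heq : ∀ x ∈ Ioo (0:ℝ) 1, deriv (deriv w) x + hlim f g α (w x) = 0) :
    ∀ x ∈ Ioo (0:ℝ) 1, ∀ y ∈ Ioo (0:ℝ) 1,
      (deriv w x)^2/2 + HH f g α (w x) = (deriv w y)^2/2 + HH f g α (w y) := by
  set E : ℝ → ℝ := fun x => (deriv w x)^2/2 + HH f g α (w x) with hEdef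
  have hEderiv : ∀ x ∈ Ioo (0:ℝ) 1, HasDerivAt E 0 x := by
    intro x hx
    obtain ⟨hw, hw'⟩ := deriv2_hasDerivAt hd hx
    have hH : HasDerivAt (fun y => HH f g α (w y)) (hlim f g α (w x) * deriv w x) x :=
      (hasDerivAt_HH hcont (w x)).comp x hw
    have hsq : HasDerivAt (fun y => (deriv w y)^2/2)
        ((2 * deriv w x ^ 1 * deriv (deriv w) x)/2) x := (hw'.pow 2).div_const 2
    have htot := hsq.add hH
    have h0 := heq x hx
    refine htot.congr_deriv ?_
    have hdd : deriv (deriv w) x = -hlim f g α (w x) := by linarith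
    rw [hdd]
    ring
  have key : ∀ p q : ℝ, p ∈ Ioo (0:ℝ) 1 → q ∈ Ioo (0:ℝ) 1 → p < q → E p = E q := by
    intro p q hp hq hpq
    have hIcc : Icc p q ⊆ Ioo (0:ℝ) 1 := fun z hz => ⟨hp.1.trans_le hz.1, lt_of_le_of_lt hz.2 hq.2⟩
    obtain ⟨c, hcm, hceq⟩ := exists_deriv_eq_slope E hpq
      (fun z hz => (hEderiv z (hIcc hz)).continuousAt.continuousWithinAt)
      (fun z hz => ((hEderiv z (hIcc (Ioo_subset_Icc_self hz))).differentiableAt).differentiableWithinAt)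
    have h0 : deriv E c = 0 := (hEderiv c (hIcc (Ioo_subset_Icc_self hcm))).deriv
    rw [h0] at hceq
    have hneq : q - p ≠ 0 := sub_ne_zero.2 hpq.ne'
    rcases div_eq_zero_iff.1 hceq.symm with h' | h'
    · linarith
    · exact absurd h' hneq
  intro x hx y hy
  rcases lt_trichotomy x y with h | h | h
  · exact key x y hx hy h
  · rw [h]
  · exact (key y x hy hx h).symm

lemma deriv_tendsto (hcont : Continuous (hlim f g α)) {w : ℝ → ℝ} {E c z : ℝ}
    (hz : z ∈ Icc (0:ℝ) 1) (hc : ContinuousOn w (Icc 0 1)) (hwz : w z = c)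
    (hfor : ∀ x ∈ Ioo (0:ℝ) 1, deriv w x = -Real.sqrt (2*(E - HH f g α (w x)))) :
    Tendsto (deriv w) (𝓝[Ioo (0:ℝ) 1] z) (𝓝 (-Real.sqrt (2*(E - HH f g α c)))) := by
  have h1 : Tendsto w (𝓝[Ioo (0:ℝ) 1] z) (𝓝 c) := by
    have := (hc z hz).mono_left (nhdsWithin_mono _ Ioo_subset_Icc_self)
    rwa [hwz] at this
  have h2 : Tendsto (fun x => -Real.sqrt (2*(E - HH f g α (w x)))) (𝓝[Ioo (0:ℝ) 1] z)
      (𝓝 (-Real.sqrt (2*(E - HH f g α c)))) := by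
    apply Tendsto.neg
    exact (Real.continuous_sqrt.tendsto _).comp
      (tendsto_const_nhds.mul (tendsto_const_nhds.sub
        (((continuous_HH hcont).tendsto c).comp h1)))
  exact Tendsto.congr' (eventually_of_mem self_mem_nhdsWithin fun x hx => (hfor x hx).symm) h2

lemma extract_left {P : ℝ → Prop} (hev : ∀ᶠ x in 𝓝[Ioo (0:ℝ) 1] 0, P x) :
    ∃ q, 0 < q ∧ q ≤ 1 ∧ ∀ x, 0 < x → x < q → P x := by
  obtain ⟨U, hUo, hU0, hUsub⟩ := mem_nhdsWithin.1 hev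
  obtain ⟨ε, hε, hball⟩ := Metric.isOpen_iff.1 hUo 0 hU0
  refine ⟨min ε 1, lt_min hε one_pos, min_le_right _ _, fun x hx1 hx2 => ?_⟩
  apply hUsub
  constructor
  · apply hball
    rw [mem_ball, Real.dist_eq, sub_zero, abs_of_pos hx1]
    exact hx2.trans_le (min_le_left _ _)
  · exact ⟨hx1, hx2.trans_le (min_le_right _ _)⟩

lemma extract_right {P : ℝ → Prop} (hev : ∀ᶠ x in 𝓝[Ioo (0:ℝ) 1] 1, P x) :
    ∃ q, 0 ≤ q ∧ q < 1 ∧ ∀ x, q < x → x < 1 → P x := by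
  obtain ⟨U, hUo, hU1, hUsub⟩ := mem_nhdsWithin.1 hev
  obtain ⟨ε, hε, hball⟩ := Metric.isOpen_iff.1 hUo 1 hU1
  refine ⟨max 0 (1-ε), le_max_left _ _, max_lt one_pos (by linarith), fun x hx1 hx2 => ?_⟩
  have hx0 : 0 < x := lt_of_le_of_lt (le_max_left _ _) hx1
  have hxε : 1 - ε < x := lt_of_le_of_lt (le_max_right _ _) hx1
  apply hUsub
  constructor
  · apply hball
    rw [mem_ball, Real.dist_eq, abs_of_neg (by linarith : x - 1 < 0)]
    linarith
  · exact ⟨hx0, hx2⟩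

lemma master (hf : ContDiffOn ℝ 1 f (Ici (0:ℝ))) (hg : ContDiffOn ℝ 1 g (Ici (0:ℝ)))
    (hf0 : f 0 = 0) (hg0 : g 0 = 0)
    (hfneg : ∀ s > (1:ℝ), f s < 0) (hgneg : ∀ s > (1:ℝ), g s < 0)
    (hα : 0 < α) (ha : max 1 α < a) (hb : b < -1)
    {K : NNReal} {V : ℝ × ℝ → ℝ × ℝ} (hVlip : LipschitzWith K V)
    (hVspec : ∀ p : ℝ × ℝ, p.1 ∈ Icc b a → V p = (p.2, - hlim f g α p.1))
    {w : ℝ → ℝ} (hc : ContinuousOn w (Icc 0 1)) (hd : ContDiffOn ℝ 2 w (Ioo 0 1))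
    (heq : ∀ x ∈ Ioo (0:ℝ) 1, deriv (deriv w) x + hlim f g α (w x) = 0)
    (h0 : w 0 = a) (h1 : w 1 = b) :
    ∃ E : ℝ,
      (∀ x ∈ Icc (0:ℝ) 1, w x ∈ Icc b a) ∧
      (∀ t ∈ Ioo (0:ℝ) 1, HasDerivAt (fun s => (w s, deriv w s)) (V (w t, deriv w t)) t) ∧
      (∀ x ∈ Ioo (0:ℝ) 1, deriv w x = - Real.sqrt (2 * (E - HH f g α (w x)))) ∧
      (∀ x ∈ Ioo (0:ℝ) 1, HH f g α (w x) < E) ∧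
      HH f g α a < E ∧ HH f g α b ≤ E := by
  have hcont := hlim_continuous hf hg hα
  have hαa : α < a := (le_max_right 1 α).trans_lt ha
  have h1a : (1:ℝ) < a := (le_max_left 1 α).trans_lt ha
  have hba : b < a := by linarith
  have hb0 : b < 0 := by linarith
  have ha0 : 0 < a := by linarith
  -- upper bound
  have hub : ∀ x ∈ Icc (0:ℝ) 1, w x ≤ a := by
    obtain ⟨x0, hx0, hmax⟩ := isCompact_Icc.exists_isMaxOn (nonempty_Icc.2 zero_le_one) hc
    intro x hx
    refine le_trans (hmax hx) ?_
    by_contra hcon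
    push_neg at hcon
    have hx0i : x0 ∈ Ioo (0:ℝ) 1 := by
      constructor
      · rcases eq_or_lt_of_le hx0.1 with h | h
        · rw [← h, h0] at hcon
          exact absurd hcon (lt_irrefl a)
        · exact h
      · rcases eq_or_lt_of_le hx0.2 with h | h
        · rw [h, h1] at hcon
          linarith
        · exact h
    have hlm : IsLocalMax w x0 := hmax.isLocalMax (Icc_mem_nhds hx0i.1 hx0i.2)
    have hd0 : deriv w x0 = 0 := hlm.deriv_eq_zero
    have hdd : 0 < deriv (deriv w) x0 := by
      have hq := heq x0 hx0i
      have hneg := hlim_neg hg0 hfneg hα (hαa.trans hcon)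
      linarith
    exact second_deriv_not_localMax hc hd hx0i hd0 hdd hlm
  -- lower bound
  have hlb : ∀ x ∈ Icc (0:ℝ) 1, b ≤ w x := by
    obtain ⟨x0, hx0, hmin⟩ := isCompact_Icc.exists_isMinOn (nonempty_Icc.2 zero_le_one) hc
    intro x hx
    refine le_trans ?_ (hmin hx)
    by_contra hcon
    push_neg at hcon
    have hx0i : x0 ∈ Ioo (0:ℝ) 1 := by
      constructor
      · rcases eq_or_lt_of_le hx0.1 with h | h
        · rw [← h, h0] at hcon
          linarith
        · exact h
      · rcases eq_or_lt_of_le hx0.2 with h | h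
        · rw [h, h1] at hcon
          exact absurd hcon (lt_irrefl b)
        · exact h
    have hlm : IsLocalMin w x0 := hmin.isLocalMin (Icc_mem_nhds hx0i.1 hx0i.2)
    have hd0 : deriv w x0 = 0 := hlm.deriv_eq_zero
    have hdd : deriv (deriv w) x0 < 0 := by
      have hq := heq x0 hx0i
      have hpos := hlim_pos hf0 hgneg hα (hcon.trans hb)
      linarith
    exact second_deriv_not_localMin hc hd hx0i hd0 hdd hlm
  have hbound : ∀ x ∈ Icc (0:ℝ) 1, w x ∈ Icc b a := fun x hx => ⟨hlb x hx, hub x hx⟩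
  -- the phase-plane vector derivative
  have hFd : ∀ t ∈ Ioo (0:ℝ) 1, HasDerivAt (fun s => (w s, deriv w s)) (V (w t, deriv w t)) t := by
    intro t ht
    obtain ⟨hw, hw'⟩ := deriv2_hasDerivAt hd ht
    have hVe : V (w t, deriv w t) = (deriv w t, deriv (deriv w) t) := by
      rw [hVspec _ (hbound t (Ioo_subset_Icc_self ht))]
      have hq := heq t ht
      simp only [Prod.mk.injEq]
      exact ⟨trivial, by linarith⟩
    rw [hVe]
    exact hw.prodMk hw'
  -- no interior critical point
  have hne : ∀ x ∈ Ioo (0:ℝ) 1, deriv w x ≠ 0 := by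
    intro x0 hx0 hcrit
    set l := max 0 (2*x0 - 1) with hldef
    set r := min 1 (2*x0) with hrdef
    have hlr : l + r = 2*x0 := by
      rcases le_total 1 (2*x0) with h | h
      · rw [hldef, hrdef, min_eq_left h, max_eq_right (by linarith)]
        ring
      · rw [hldef, hrdef, min_eq_right h, max_eq_left (by linarith)]
        ring
    have hl0 : 0 ≤ l := le_max_left _ _
    have hr1 : r ≤ 1 := min_le_left _ _
    have hx0lr : x0 ∈ Ioo l r :=
      ⟨max_lt hx0.1 (by linarith [hx0.2]), lt_min hx0.2 (by linarith [hx0.1])⟩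
    have hsub : Ioo l r ⊆ Ioo (0:ℝ) 1 := fun t ht => ⟨hl0.trans_lt ht.1, ht.2.trans_le hr1⟩
    have hmem : ∀ t ∈ Ioo l r, 2*x0 - t ∈ Ioo l r := fun t ht =>
      ⟨by linarith [ht.2], by linarith [ht.1]⟩
    have hG : ∀ t ∈ Ioo l r, HasDerivAt (fun s => (w (2*x0 - s), -deriv w (2*x0 - s)))
        (V (w (2*x0 - t), -deriv w (2*x0 - t))) t := by
      intro t ht
      have hmt : 2*x0 - t ∈ Ioo (0:ℝ) 1 := hsub (hmem t ht)
      obtain ⟨hw, hw'⟩ := deriv2_hasDerivAt hd hmt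
      have hinner : HasDerivAt (fun s : ℝ => 2*x0 - s) (-1) t := by
        simpa using (hasDerivAt_id t).const_sub (2*x0)
      have hcomp1 : HasDerivAt (fun s => w (2*x0 - s)) (-(deriv w (2*x0 - t))) t := by
        have := hw.comp t hinner
        simpa [mul_neg_one, Function.comp_def] using this
      have hcomp2 : HasDerivAt (fun s => -deriv w (2*x0 - s)) (deriv (deriv w) (2*x0 - t)) t := by
        have := (hw'.comp t hinner).neg
        simpa [mul_neg_one, Function.comp_def, Pi.neg_def] using this
      have hVe : V (w (2*x0 - t), -deriv w (2*x0 - t))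
          = (-(deriv w (2*x0-t)), deriv (deriv w) (2*x0-t)) := by
        rw [hVspec _ (hbound _ (Ioo_subset_Icc_self hmt))]
        have hq := heq _ hmt
        simp only [Prod.mk.injEq]
        exact ⟨trivial, by linarith⟩
      rw [hVe]
      exact hcomp1.prodMk hcomp2
    have huniq := ODE_solution_unique_of_mem_Ioo (v := fun _ p => V p)
      (s := fun _ => (univ : Set (ℝ×ℝ))) (fun t _ => hVlip.lipschitzOnWith) hx0lr
      (fun t ht => ⟨hFd t (hsub ht), mem_univ _⟩)
      (fun t ht => ⟨hG t ht, mem_univ _⟩)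
      (by simp [show 2*x0 - x0 = x0 by ring, hcrit])
    have hwrefl : ∀ t ∈ Ioo l r, w t = w (2*x0 - t) := fun t ht => (Prod.ext_iff.1 (huniq ht)).1
    have hlltr : l < r := hx0lr.1.trans hx0lr.2
    have hrmem : r ∈ Icc (0:ℝ) 1 := ⟨hl0.trans hlltr.le, hr1⟩
    have hlmem : l ∈ Icc (0:ℝ) 1 := ⟨hl0, hlltr.le.trans hr1⟩
    haveI hNB : (𝓝[Ioo l r] r).NeBot := neBot_Ioo hlltr (right_mem_Icc.2 hlltr.le)
    have hT1 : Tendsto w (𝓝[Ioo l r] r) (𝓝 (w r)) :=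
      (hc r hrmem).mono_left (nhdsWithin_mono _ (fun t ht => Ioo_subset_Icc_self (hsub ht)))
    have hmapT : Tendsto (fun t => 2*x0 - t) (𝓝[Ioo l r] r) (𝓝[Icc (0:ℝ) 1] l) := by
      apply tendsto_nhdsWithin_of_tendsto_nhds_of_eventually_within
      · have h' : Tendsto (fun t : ℝ => 2*x0 - t) (𝓝 r) (𝓝 (2*x0 - r)) :=
          (continuous_const.sub continuous_id).tendsto r
        have he : 2*x0 - r = l := by linarith
        rw [he] at h'
        exact h'.mono_left nhdsWithin_le_nhds
      · exact eventually_of_mem self_mem_nhdsWithin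
          fun t ht => Ioo_subset_Icc_self (hsub (hmem t ht))
    have hT2 : Tendsto (fun t => w (2*x0 - t)) (𝓝[Ioo l r] r) (𝓝 (w l)) :=
      Filter.Tendsto.comp (hc l hlmem) hmapT
    have hwr : w r = w l := tendsto_nhds_unique_of_eventuallyEq hT1 hT2
      (eventually_of_mem self_mem_nhdsWithin hwrefl)
    rcases le_or_gt (2*x0) 1 with hcase | hcase
    · have hre : r = 2*x0 := min_eq_right hcase
      have hle : l = 0 := max_eq_left (by linarith)
      rw [hre, hle, h0] at hwr
      rcases eq_or_lt_of_le hcase with h2 | h2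
      · rw [h2, h1] at hwr
        linarith
      · set y0 := 2*x0 with hy0
        have hy0i : y0 ∈ Ioo (0:ℝ) 1 := ⟨by linarith [hx0.1], h2⟩
        have hwy0 : w y0 = a := hwr
        have hmaxon : IsMaxOn w (Icc 0 1) y0 := isMaxOn_iff.2 fun y hy => by
          rw [hwy0]; exact hub y hy
        have hlm := hmaxon.isLocalMax (Icc_mem_nhds hy0i.1 hy0i.2)
        have hd0 : deriv w y0 = 0 := hlm.deriv_eq_zero
        have hdd : 0 < deriv (deriv w) y0 := by
          have hq := heq y0 hy0i
          have hnegg : hlim f g α (w y0) < 0 := by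
            rw [hwy0]; exact hlim_neg hg0 hfneg hα hαa
          linarith
        exact second_deriv_not_localMax hc hd hy0i hd0 hdd hlm
    · have hre : r = 1 := min_eq_left hcase.le
      have hle : l = 2*x0 - 1 := max_eq_right (by linarith)
      have hy0i : (2*x0 - 1) ∈ Ioo (0:ℝ) 1 := ⟨by linarith, by linarith [hx0.2]⟩
      have hwy0 : w (2*x0 - 1) = b := by
        rw [hre, hle, h1] at hwr
        exact hwr.symm
      have hminon : IsMinOn w (Icc 0 1) (2*x0-1) := isMinOn_iff.2 fun y hy => by
        rw [hwy0]; exact hlb y hy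
      have hlm := hminon.isLocalMin (Icc_mem_nhds hy0i.1 hy0i.2)
      have hd0 : deriv w (2*x0-1) = 0 := hlm.deriv_eq_zero
      have hdd : deriv (deriv w) (2*x0-1) < 0 := by
        have hq := heq _ hy0i
        have hposs : 0 < hlim f g α (w (2*x0-1)) := by
          rw [hwy0]; exact hlim_pos hf0 hgneg hα hb
        linarith
      exact second_deriv_not_localMin hc hd hy0i hd0 hdd hlm
  -- the derivative is negative
  have hderivneg : ∀ x ∈ Ioo (0:ℝ) 1, deriv w x < 0 := by
    intro x hx
    rcases lt_or_gt_of_ne (hne x hx) with h | h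
    · exact h
    · exfalso
      have hwb : b < w x := by
        rcases eq_or_lt_of_le (hlb x (Ioo_subset_Icc_self hx)) with he | hlt
        · exfalso
          have hminon : IsMinOn w (Icc 0 1) x := isMinOn_iff.2 fun y hy => by
            rw [← he]; exact hlb y hy
          exact hne x hx (hminon.isLocalMin (Icc_mem_nhds hx.1 hx.2)).deriv_eq_zero
        · exact hlt
      obtain ⟨ξ, hξ, hslope⟩ := exists_deriv_eq_slope w hx.2
        (hc.mono (Icc_subset_Icc hx.1.le le_rfl))
        ((hd.differentiableOn (by norm_num)).mono (fun z hz => ⟨hx.1.trans hz.1, hz.2⟩))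
      have hsneg : deriv w ξ < 0 := by
        rw [hslope, h1]
        apply div_neg_of_neg_of_pos
        · linarith
        · linarith [hx.2]
      have hcd : ContinuousOn (deriv w) (Icc x ξ) :=
        ((hd.deriv_of_isOpen (m := 1) isOpen_Ioo (by norm_num)).continuousOn).mono
          (fun z hz => ⟨hx.1.trans_le hz.1, lt_of_le_of_lt hz.2 hξ.2⟩)
      have h0m : (0:ℝ) ∈ Icc (deriv w ξ) (deriv w x) := ⟨hsneg.le, h.le⟩
      obtain ⟨z, hz, hz0⟩ := intermediate_value_Icc' hξ.1.le hcd h0m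
      exact hne z ⟨hx.1.trans_le hz.1, lt_of_le_of_lt hz.2 hξ.2⟩ hz0
  -- energy
  have hEall := energy_eq hcont hd heq
  obtain ⟨E, hEdef⟩ : ∃ E : ℝ, E = (deriv w (1/2))^2/2 + HH f g α (w (1/2)) := ⟨_, rfl⟩
  have hhalf : (1/2 : ℝ) ∈ Ioo (0:ℝ) 1 := by norm_num
  have hEx : ∀ x ∈ Ioo (0:ℝ) 1, (deriv w x)^2/2 + HH f g α (w x) = E :=
    fun x hx => by rw [hEdef]; exact hEall x hx _ hhalf
  have hformula : ∀ x ∈ Ioo (0:ℝ) 1, deriv w x = -Real.sqrt (2*(E - HH f g α (w x))) := by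
    intro x hx
    have h2 : 2*(E - HH f g α (w x)) = (deriv w x)^2 := by
      have := hEx x hx
      linarith
    rw [h2, Real.sqrt_sq_eq_abs, abs_of_neg (hderivneg x hx), neg_neg]
  have hHlt : ∀ x ∈ Ioo (0:ℝ) 1, HH f g α (w x) < E := by
    intro x hx
    have h2 := hEx x hx
    have h3 : 0 < (deriv w x)^2 := by nlinarith [hderivneg x hx]
    linarith
  haveI hNB0 : (𝓝[Ioo (0:ℝ) 1] (0:ℝ)).NeBot := neBot_Ioo one_pos (left_mem_Icc.2 zero_le_one)
  haveI hNB1 : (𝓝[Ioo (0:ℝ) 1] (1:ℝ)).NeBot := neBot_Ioo one_pos (right_mem_Icc.2 zero_le_one)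
  have htend0 : Tendsto w (𝓝[Ioo (0:ℝ) 1] 0) (𝓝 a) := by
    have := (hc 0 (left_mem_Icc.2 zero_le_one)).mono_left (nhdsWithin_mono _ Ioo_subset_Icc_self)
    rwa [h0] at this
  have htend1 : Tendsto w (𝓝[Ioo (0:ℝ) 1] 1) (𝓝 b) := by
    have := (hc 1 (right_mem_Icc.2 zero_le_one)).mono_left (nhdsWithin_mono _ Ioo_subset_Icc_self)
    rwa [h1] at this
  have hHa_le : HH f g α a ≤ E := le_of_tendsto (((continuous_HH hcont).tendsto a).comp htend0)
    (eventually_of_mem self_mem_nhdsWithin fun x hx => (hHlt x hx).le)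
  have hHb_le : HH f g α b ≤ E := le_of_tendsto (((continuous_HH hcont).tendsto b).comp htend1)
    (eventually_of_mem self_mem_nhdsWithin fun x hx => (hHlt x hx).le)
  have hHa : HH f g α a < E := by
    rcases lt_or_eq_of_le hHa_le with hlt | heqE
    · exact hlt
    · exfalso
      have hev : ∀ᶠ x in 𝓝[Ioo (0:ℝ) 1] 0, α < w x := htend0.eventually (eventually_gt_nhds hαa)
      obtain ⟨xb, hxb1, hxb2⟩ :=
        (hev.and (eventually_of_mem self_mem_nhdsWithin fun x hx => hx)).exists
      have hwa : w xb = a := by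
        by_contra hnea
        have hlt' : w xb < a := (hub xb (Ioo_subset_Icc_self hxb2)).lt_of_ne hnea
        have hHH : HH f g α a < HH f g α (w xb) := HH_lt hcont hg0 hfneg hα hxb1 hlt'
        have := hHlt xb hxb2
        rw [← heqE] at this
        linarith
      have hmaxon : IsMaxOn w (Icc 0 1) xb := isMaxOn_iff.2 fun y hy => by
        rw [hwa]; exact hub y hy
      exact hne xb hxb2 (hmaxon.isLocalMax (Icc_mem_nhds hxb2.1 hxb2.2)).deriv_eq_zero
  exact ⟨E, hbound, hFd, hformula, hHlt, hHa, hHb_le⟩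

lemma energies_not_lt (hcont : Continuous (hlim f g α))
    {w1 w2 : ℝ → ℝ} {E1 E2 : ℝ}
    (h1c : ContinuousOn w1 (Icc 0 1)) (h1d : ContDiffOn ℝ 2 w1 (Ioo 0 1))
    (h10 : w1 0 = a) (h11 : w1 1 = b)
    (h2c : ContinuousOn w2 (Icc 0 1)) (h2d : ContDiffOn ℝ 2 w2 (Ioo 0 1))
    (h20 : w2 0 = a) (h21 : w2 1 = b)
    (hfor1 : ∀ x ∈ Ioo (0:ℝ) 1, deriv w1 x = - Real.sqrt (2 * (E1 - HH f g α (w1 x))))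
    (hfor2 : ∀ x ∈ Ioo (0:ℝ) 1, deriv w2 x = - Real.sqrt (2 * (E2 - HH f g α (w2 x))))
    (hlt1 : ∀ x ∈ Ioo (0:ℝ) 1, HH f g α (w1 x) < E1)
    (hHa1 : HH f g α a ≤ E1) (hHb1 : HH f g α b ≤ E1) :
    ¬ (E1 < E2) := by
  intro hEE
  haveI hNB0 : (𝓝[Ioo (0:ℝ) 1] (0:ℝ)).NeBot := neBot_Ioo one_pos (left_mem_Icc.2 zero_le_one)
  haveI hNB1 : (𝓝[Ioo (0:ℝ) 1] (1:ℝ)).NeBot := neBot_Ioo one_pos (right_mem_Icc.2 zero_le_one)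
  set d : ℝ → ℝ := fun y => w1 y - w2 y with hddef
  have hdc : ContinuousOn d (Icc 0 1) := h1c.sub h2c
  have hdD : ∀ x ∈ Ioo (0:ℝ) 1, HasDerivAt d (deriv w1 x - deriv w2 x) x := fun x hx =>
    ((deriv2_hasDerivAt h1d hx).1).sub ((deriv2_hasDerivAt h2d hx).1)
  have hd0 : d 0 = 0 := by simp [hddef, h10, h20]
  have hd1 : d 1 = 0 := by simp [hddef, h11, h21]
  -- derivative difference tends to positive limit at 0
  have htendD0 : Tendsto (fun x => deriv w1 x - deriv w2 x) (𝓝[Ioo (0:ℝ) 1] 0)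
      (𝓝 (Real.sqrt (2*(E2 - HH f g α a)) - Real.sqrt (2*(E1 - HH f g α a)))) := by
    have t1 := deriv_tendsto hcont (left_mem_Icc.2 zero_le_one) h1c h10 hfor1
    have t2 := deriv_tendsto hcont (left_mem_Icc.2 zero_le_one) h2c h20 hfor2
    have h' := t1.sub t2
    rw [show Real.sqrt (2*(E2 - HH f g α a)) - Real.sqrt (2*(E1 - HH f g α a))
      = -Real.sqrt (2*(E1 - HH f g α a)) - -Real.sqrt (2*(E2 - HH f g α a)) from by ring]
    exact h'
  have hL0 : 0 < Real.sqrt (2*(E2 - HH f g α a)) - Real.sqrt (2*(E1 - HH f g α a)) := by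
    have hs := Real.sqrt_lt_sqrt (by linarith : (0:ℝ) ≤ 2*(E1 - HH f g α a))
      (by linarith : 2*(E1 - HH f g α a) < 2*(E2 - HH f g α a))
    linarith
  have hevD0 : ∀ᶠ x in 𝓝[Ioo (0:ℝ) 1] 0, 0 < deriv w1 x - deriv w2 x :=
    htendD0.eventually (eventually_gt_nhds hL0)
  obtain ⟨q0, hq0pos, hq0le, hq0⟩ := extract_left hevD0
  -- d is positive on (0, q0)
  have hdpos : ∀ x, 0 < x → x < q0 → 0 < d x := by
    intro x hx1 hx2
    have hxI : x ∈ Ioo (0:ℝ) 1 := ⟨hx1, lt_of_lt_of_le hx2 hq0le⟩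
    obtain ⟨c, hcm, hceq⟩ := exists_deriv_eq_slope d hx1
      (hdc.mono (Icc_subset_Icc le_rfl hxI.2.le))
      (fun z hz => ((hdD z ⟨hz.1, hz.2.trans hxI.2⟩).differentiableAt).differentiableWithinAt)
    have hdc' : 0 < deriv d c := by
      rw [(hdD c ⟨hcm.1, hcm.2.trans hxI.2⟩).deriv]
      exact hq0 c hcm.1 (hcm.2.trans hx2)
    rw [hceq, hd0, sub_zero, sub_zero] at hdc'
    have h' := mul_pos hdc' hx1
    rwa [div_mul_cancel₀ _ hx1.ne'] at h'
  -- derivative difference tends to positive limit at 1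
  have htendD1 : Tendsto (fun x => deriv w1 x - deriv w2 x) (𝓝[Ioo (0:ℝ) 1] 1)
      (𝓝 (Real.sqrt (2*(E2 - HH f g α b)) - Real.sqrt (2*(E1 - HH f g α b)))) := by
    have t1 := deriv_tendsto hcont (right_mem_Icc.2 zero_le_one) h1c h11 hfor1
    have t2 := deriv_tendsto hcont (right_mem_Icc.2 zero_le_one) h2c h21 hfor2
    have h' := t1.sub t2
    rw [show Real.sqrt (2*(E2 - HH f g α b)) - Real.sqrt (2*(E1 - HH f g α b))
      = -Real.sqrt (2*(E1 - HH f g α b)) - -Real.sqrt (2*(E2 - HH f g α b)) from by ring]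
    exact h'
  have hL1 : 0 < Real.sqrt (2*(E2 - HH f g α b)) - Real.sqrt (2*(E1 - HH f g α b)) := by
    have hs := Real.sqrt_lt_sqrt (by linarith : (0:ℝ) ≤ 2*(E1 - HH f g α b))
      (by linarith : 2*(E1 - HH f g α b) < 2*(E2 - HH f g α b))
    linarith
  have hevD1 : ∀ᶠ x in 𝓝[Ioo (0:ℝ) 1] 1, 0 < deriv w1 x - deriv w2 x :=
    htendD1.eventually (eventually_gt_nhds hL1)
  obtain ⟨q1, hq1nonneg, hq1lt, hq1⟩ := extract_right hevD1
  -- the first zero of d after p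
  set p := q0/2 with hpdef
  have hp0 : 0 < p := half_pos hq0pos
  have hpq0 : p < q0 := by
    rw [hpdef]; linarith
  have hp1 : p < 1 := lt_of_lt_of_le hpq0 hq0le
  have hdp : 0 < d p := hdpos p hp0 hpq0
  set Z := Icc p 1 ∩ d ⁻¹' {0} with hZdef
  have hZclosed : IsClosed Z :=
    (hdc.mono (Icc_subset_Icc hp0.le le_rfl)).preimage_isClosed_of_isClosed
      isClosed_Icc isClosed_singleton
  have h1Z : (1:ℝ) ∈ Z := ⟨⟨hp1.le, le_rfl⟩, by simp [hd1]⟩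
  have hZbdd : BddBelow Z := ⟨p, fun z hz => hz.1.1⟩
  set x' := sInf Z with hx'def
  have hx'Z : x' ∈ Z := hZclosed.csInf_mem ⟨1, h1Z⟩ hZbdd
  have hx'0 : d x' = 0 := by simpa using hx'Z.2
  have hpx'le : p ≤ x' := le_csInf ⟨1, h1Z⟩ fun z hz => hz.1.1
  have hpx' : p < x' := by
    rcases eq_or_lt_of_le hpx'le with h | h
    · exfalso; rw [← h] at hx'0; linarith
    · exact h
  have hx'1 : x' ≤ 1 := hx'Z.1.2
  have hdpos' : ∀ x, p ≤ x → x < x' → 0 < d x := by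
    intro x hx1 hx2
    rcases lt_trichotomy (d x) 0 with hneg | hzero | hpos
    · exfalso
      have h0m : (0:ℝ) ∈ Icc (d x) (d p) := ⟨hneg.le, hdp.le⟩
      have hcd : ContinuousOn d (Icc p x) := hdc.mono
        (Icc_subset_Icc hp0.le (by linarith))
      obtain ⟨z, hz, hz0⟩ := intermediate_value_Icc' hx1 hcd h0m
      have hzx : x' ≤ z := csInf_le hZbdd ⟨⟨hz.1, by linarith [hz.2]⟩, by simp [hz0]⟩
      linarith [hz.2]
    · exfalso
      have : x' ≤ x := csInf_le hZbdd ⟨⟨hx1, by linarith⟩, by simp [hzero]⟩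
      linarith
    · exact hpos
  rcases eq_or_lt_of_le hx'1 with hx'eq | hx'lt
  · -- x' = 1 : d > 0 on [p, 1), MVT near 1 gives a negative derivative near 1
    set xh := (max p q1 + 1)/2 with hxhdef
    have hmax1 : max p q1 < 1 := max_lt hp1 hq1lt
    have hxh1 : xh < 1 := by rw [hxhdef]; linarith
    have hxhgt : max p q1 < xh := by rw [hxhdef]; linarith
    have hxhp : p < xh := lt_of_le_of_lt (le_max_left _ _) hxhgt
    have hxhq1 : q1 < xh := lt_of_le_of_lt (le_max_right _ _) hxhgt
    have hdxh : 0 < d xh := hdpos' xh hxhp.le (by rw [hx'eq]; exact hxh1)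
    obtain ⟨ξ, hξm, hξeq⟩ := exists_deriv_eq_slope d hxh1
      (hdc.mono (Icc_subset_Icc (by linarith) le_rfl))
      (fun z hz => ((hdD z ⟨by linarith [hz.1], hz.2⟩).differentiableAt).differentiableWithinAt)
    have hξI : ξ ∈ Ioo (0:ℝ) 1 := ⟨by linarith [hξm.1], hξm.2⟩
    have hd' : deriv d ξ = deriv w1 ξ - deriv w2 ξ := (hdD ξ hξI).deriv
    have hξpos : 0 < deriv d ξ := by
      rw [hd']
      exact hq1 ξ (hxhq1.trans hξm.1) hξm.2
    rw [hξeq, hd1, zero_sub] at hξpos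
    have : (-(d xh))/(1 - xh) < 0 := div_neg_of_neg_of_pos (by linarith) (by linarith)
    linarith
  · -- x' < 1 : positive derivative at x', but left slope is nonpositive
    have hx'I : x' ∈ Ioo (0:ℝ) 1 := ⟨lt_trans hp0 hpx', hx'lt⟩
    have hcc : w2 x' = w1 x' := by
      have h' : w1 x' - w2 x' = 0 := hx'0
      linarith
    have hd' : HasDerivAt d (deriv w1 x' - deriv w2 x') x' := hdD x' hx'I
    have hDpos : 0 < deriv w1 x' - deriv w2 x' := by
      rw [hfor1 x' hx'I, hfor2 x' hx'I, hcc]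
      have hlt' := hlt1 x' hx'I
      have hs := Real.sqrt_lt_sqrt (by linarith : (0:ℝ) ≤ 2*(E1 - HH f g α (w1 x')))
        (by linarith : 2*(E1 - HH f g α (w1 x')) < 2*(E2 - HH f g α (w1 x')))
      linarith
    have hslope := hasDerivAt_iff_tendsto_slope.1 hd'
    have hle0 : deriv w1 x' - deriv w2 x' ≤ 0 := by
      refine le_of_tendsto (hslope.mono_left
        (nhdsWithin_mono _ fun y (hy : y ∈ Iio x') => (ne_of_lt hy : y ≠ x'))) ?_
      filter_upwards [Ioo_mem_nhdsLT_of_mem ⟨hpx', le_rfl⟩] with y hy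
      rw [slope_def_field]
      have hnum : 0 ≤ d y - d x' := by
        rw [hx'0, sub_zero]
        exact (hdpos' y hy.1.le hy.2).le
      have hden : y - x' ≤ 0 := by linarith [hy.2]
      exact div_nonpos_iff.2 (Or.inl ⟨hnum, hden⟩)
    linarith

end Stmt15Aux

/-- Section 6, 1-D uniqueness: if `a > max{1,α}` and `b < −1`, there is at
most one `w`, continuous on `[0,1]` and C² on `(0,1)`, with `w'' + h(w) = 0` on `(0,1)`,
`w(0) = a`, `w(1) = b`. -/
theorem stmt_15 (f g : ℝ → ℝ)
    (hf : ContDiffOn ℝ 1 f (Ici (0 : ℝ))) (hg : ContDiffOn ℝ 1 g (Ici (0 : ℝ)))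
    (hf0 : f 0 = 0) (hg0 : g 0 = 0)
    (hfpos : ∀ s ∈ Ioo (0 : ℝ) 1, 0 < f s) (hgpos : ∀ s ∈ Ioo (0 : ℝ) 1, 0 < g s)
    (hfneg : ∀ s > (1 : ℝ), f s < 0) (hgneg : ∀ s > (1 : ℝ), g s < 0)
    (α a b : ℝ) (hα : 0 < α) (ha : max 1 α < a) (hb : b < -1)
    (w1 w2 : ℝ → ℝ)
    (h1c : ContinuousOn w1 (Icc 0 1)) (h1d : ContDiffOn ℝ 2 w1 (Ioo 0 1))
    (h1eq : ∀ x ∈ Ioo (0 : ℝ) 1, deriv (deriv w1) x + hlim f g α (w1 x) = 0)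
    (h10 : w1 0 = a) (h11 : w1 1 = b)
    (h2c : ContinuousOn w2 (Icc 0 1)) (h2d : ContDiffOn ℝ 2 w2 (Ioo 0 1))
    (h2eq : ∀ x ∈ Ioo (0 : ℝ) 1, deriv (deriv w2) x + hlim f g α (w2 x) = 0)
    (h20 : w2 0 = a) (h21 : w2 1 = b) :
    EqOn w1 w2 (Icc 0 1) := by
  classical
  have hcont := Stmt15Aux.hlim_continuous hf hg hα
  have hαa : α < a := (le_max_right 1 α).trans_lt ha
  have h1a : (1:ℝ) < a := (le_max_left 1 α).trans_lt ha
  have hb0 : b ≤ 0 := by linarith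
  have ha0 : (0:ℝ) ≤ a := by linarith
  obtain ⟨K, V, hVlip, hVspec⟩ := Stmt15Aux.exists_V hf hg hα hb0 ha0
  obtain ⟨E1, hbound1, hFd1, hfor1, hlt1, hHa1, hHb1⟩ :=
    Stmt15Aux.master hf hg hf0 hg0 hfneg hgneg hα ha hb hVlip hVspec h1c h1d h1eq h10 h11
  obtain ⟨E2, hbound2, hFd2, hfor2, hlt2, hHa2, hHb2⟩ :=
    Stmt15Aux.master hf hg hf0 hg0 hfneg hgneg hα ha hb hVlip hVspec h2c h2d h2eq h20 h21
  have hE : E1 = E2 := by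
    have hn1 := Stmt15Aux.energies_not_lt hcont h1c h1d h10 h11 h2c h2d h20 h21
      hfor1 hfor2 hlt1 hHa1.le hHb1
    have hn2 := Stmt15Aux.energies_not_lt hcont h2c h2d h20 h21 h1c h1d h10 h11
      hfor2 hfor1 hlt2 hHa2.le hHb2
    rcases lt_trichotomy E1 E2 with h | h | h
    · exact absurd h hn1
    · exact h
    · exact absurd h hn2
  subst hE
  intro x hx
  rcases eq_or_lt_of_le hx.1 with h0x | h0x
  · rw [← h0x, h10, h20]
  rcases eq_or_lt_of_le hx.2 with h1x | h1x
  · rw [h1x, h11, h21]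
  have hxI : x ∈ Ioo (0:ℝ) 1 := ⟨h0x, h1x⟩
  have key : ∀ ε ∈ Ioo (0:ℝ) x, dist ((w1 x, deriv w1 x) : ℝ × ℝ) (w2 x, deriv w2 x)
      ≤ dist ((w1 ε, deriv w1 ε) : ℝ × ℝ) (w2 ε, deriv w2 ε) * Real.exp (K * x) := by
    intro ε hε
    have hsubset : Icc ε x ⊆ Ioo (0:ℝ) 1 :=
      fun t ht => ⟨hε.1.trans_le ht.1, lt_of_le_of_lt ht.2 hxI.2⟩
    have h1cont : ContinuousOn (fun s => ((w1 s, deriv w1 s) : ℝ × ℝ)) (Icc ε x) :=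
      fun t ht => ((hFd1 t (hsubset ht)).continuousAt).continuousWithinAt
    have h2cont : ContinuousOn (fun s => ((w2 s, deriv w2 s) : ℝ × ℝ)) (Icc ε x) :=
      fun t ht => ((hFd2 t (hsubset ht)).continuousAt).continuousWithinAt
    have hest := dist_le_of_trajectories_ODE (v := fun _ p => V p) (fun _ => hVlip)
      h1cont (fun t ht => (hFd1 t (hsubset (Ico_subset_Icc_self ht))).hasDerivWithinAt)
      h2cont (fun t ht => (hFd2 t (hsubset (Ico_subset_Icc_self ht))).hasDerivWithinAt)
      le_rfl x (right_mem_Icc.2 hε.2.le)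
    refine hest.trans ?_
    have hexp : Real.exp (K * (x - ε)) ≤ Real.exp (K * x) := by
      apply Real.exp_le_exp.2
      have hK0 : (0:ℝ) ≤ (K:ℝ) := K.coe_nonneg
      nlinarith [hε.1]
    exact mul_le_mul_of_nonneg_left hexp dist_nonneg
  haveI : (𝓝[Ioo (0:ℝ) x] (0:ℝ)).NeBot := Stmt15Aux.neBot_Ioo h0x (left_mem_Icc.2 h0x.le)
  have hmono : 𝓝[Ioo (0:ℝ) x] (0:ℝ) ≤ 𝓝[Ioo (0:ℝ) 1] 0 :=
    nhdsWithin_mono _ (Ioo_subset_Ioo le_rfl hxI.2.le)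
  have htw1 : Tendsto (fun ε => ((w1 ε, deriv w1 ε) : ℝ × ℝ)) (𝓝[Ioo (0:ℝ) x] 0)
      (𝓝 (a, -Real.sqrt (2*(E1 - Stmt15Aux.HH f g α a)))) := by
    apply Tendsto.prodMk_nhds
    · have h' := (h1c 0 (left_mem_Icc.2 zero_le_one)).mono_left
        (le_trans hmono (nhdsWithin_mono _ Ioo_subset_Icc_self))
      rwa [h10] at h'
    · exact (Stmt15Aux.deriv_tendsto hcont (left_mem_Icc.2 zero_le_one)
        h1c h10 hfor1).mono_left hmono
  have htw2 : Tendsto (fun ε => ((w2 ε, deriv w2 ε) : ℝ × ℝ)) (𝓝[Ioo (0:ℝ) x] 0)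
      (𝓝 (a, -Real.sqrt (2*(E1 - Stmt15Aux.HH f g α a)))) := by
    apply Tendsto.prodMk_nhds
    · have h' := (h2c 0 (left_mem_Icc.2 zero_le_one)).mono_left
        (le_trans hmono (nhdsWithin_mono _ Ioo_subset_Icc_self))
      rwa [h20] at h'
    · exact (Stmt15Aux.deriv_tendsto hcont (left_mem_Icc.2 zero_le_one)
        h2c h20 hfor2).mono_left hmono
  have hdistt : Tendsto (fun ε => dist ((w1 ε, deriv w1 ε) : ℝ × ℝ) (w2 ε, deriv w2 ε)
      * Real.exp (K * x)) (𝓝[Ioo (0:ℝ) x] 0) (𝓝 0) := by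
    have h' := (htw1.dist htw2).mul_const (Real.exp ((K:ℝ) * x))
    simpa using h'
  have hle := ge_of_tendsto hdistt (eventually_of_mem self_mem_nhdsWithin key)
  have heq0 : ((w1 x, deriv w1 x) : ℝ × ℝ) = (w2 x, deriv w2 x) := dist_le_zero.1 hle
  exact (Prod.ext_iff.1 heq0).1
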